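/- Let p be an odd prime and consider the permutations of ℤ_p × ℤ_4 given by μ(i,j) = (i+1,j), σν(i,j) = (-i,j+1), and τ(i,j) = (-i,-j), and let H = ⟨μ, σν, τ⟩, a subgroup of the symmetric group on ℤ_p × ℤ_4. Then the minimal normal subgroups of H are exactly ⟨μ⟩ and ⟨ν²⟩, where ν² is the permutation (i,j) ↦ (i,j+2). -/

import Mathlib

open SimpleGraph

namespace OG4

variable {V : Type*} {W : Type*}

/-! ### Normal quotients, cycles, and basic pairs -/

/-- The setoid of orbits of a group `N` of permutations of `V`. -/
def orbitSetoid (N : Subgroup (Equiv.Perm V)) : Setoid V := MulAction.orbitRel N V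

/-- The (normal) quotient graph of a graph `Γ` with respect to a group `N` of permutations:
its vertices are the `N`-orbits, two distinct orbits being adjacent iff some vertex of one is
adjacent in `Γ` to some vertex of the other. -/
def quotientGraph (Γ : SimpleGraph V) (N : Subgroup (Equiv.Perm V)) :
    SimpleGraph (Quotient (orbitSetoid N)) :=
  SimpleGraph.fromRel fun a b =>
    ∃ x y : V, Quotient.mk (orbitSetoid N) x = a ∧ Quotient.mk (orbitSetoid N) y = b ∧ Γ.Adj x y

/-- `N` is a normal subgroup of the subgroup `G` (of some ambient group). -/
def NormalIn {G : Type*} [Group G] (N H : Subgroup G) : Prop :=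
  N ≤ H ∧ ∀ h ∈ H, ∀ n ∈ N, h * n * h⁻¹ ∈ N

/-- A graph is isomorphic to a cycle graph `C_m` for some `m ≥ 3`. -/
def IsoCycle (Δ : SimpleGraph W) : Prop :=
  ∃ m : ℕ, 3 ≤ m ∧ Nonempty (Δ ≃g SimpleGraph.cycleGraph m)

/-- Every normal quotient of `(Γ, G)` relative to a nontrivial normal subgroup is degenerate:
it has at most 2 vertices or is a cycle. -/
def IsBasic (Γ : SimpleGraph V) (G : Subgroup (Equiv.Perm V)) : Prop :=
  ∀ N : Subgroup (Equiv.Perm V), NormalIn N G → N ≠ ⊥ →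
    Nat.card (Quotient (orbitSetoid N)) ≤ 2 ∨ IsoCycle (quotientGraph Γ N)

/-- `(Γ, G)` is basic of cycle type. -/
def BasicOfCycleType (Γ : SimpleGraph V) (G : Subgroup (Equiv.Perm V)) : Prop :=
  IsBasic Γ G ∧
    ∃ N : Subgroup (Equiv.Perm V), NormalIn N G ∧ N ≠ ⊥ ∧ IsoCycle (quotientGraph Γ N)

/-- The kernel of the action of `G` on the set of `N`-orbits. -/
def orbitKernel (G N : Subgroup (Equiv.Perm V)) : Subgroup (Equiv.Perm V) where
  carrier := {g | g ∈ G ∧ ∀ x : V,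
    Quotient.mk (orbitSetoid N) (g x) = Quotient.mk (orbitSetoid N) x}
  one_mem' := ⟨G.one_mem, fun x => by simp⟩
  mul_mem' := by
    rintro a b ⟨haG, ha⟩ ⟨hbG, hb⟩
    refine ⟨G.mul_mem haG hbG, fun x => ?_⟩
    rw [Equiv.Perm.mul_apply, ha (b x), hb x]
  inv_mem' := by
    rintro a ⟨haG, ha⟩
    refine ⟨G.inv_mem haG, fun x => ?_⟩
    have h := ha (a⁻¹ x)
    rw [show a (a⁻¹ x) = x from a.apply_symm_apply x] at h
    exact h.symm

/-- `(Γ, G)` has a pair of independent cyclic normal quotients. -/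
def HasIndepCyclicQuotients (Γ : SimpleGraph V) (G : Subgroup (Equiv.Perm V)) : Prop :=
  ∃ N M : Subgroup (Equiv.Perm V), NormalIn N G ∧ NormalIn M G ∧
    IsoCycle (quotientGraph Γ N) ∧ IsoCycle (quotientGraph Γ M) ∧
    ¬ IsoCycle (quotientGraph Γ (orbitKernel G N ⊓ orbitKernel G M))

/-- `(Γ, G)` is basic of independent-cycle type. -/
def BasicOfIndependentCycleType (Γ : SimpleGraph V) (G : Subgroup (Equiv.Perm V)) : Prop :=
  IsBasic Γ G ∧ HasIndepCyclicQuotients Γ G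

/-- Isomorphism of graph-group pairs: a graph isomorphism conjugating one group onto the other. -/
def PairIso (Γ : SimpleGraph V) (G : Subgroup (Equiv.Perm V))
    (Δ : SimpleGraph W) (H : Subgroup (Equiv.Perm W)) : Prop :=
  ∃ e : Γ ≃g Δ, ∀ h : Equiv.Perm W, h ∈ H ↔ ∃ g ∈ G, e.toEquiv.permCongr g = h

/-! ### Minimal normal subgroups -/

/-- `M` is a minimal normal subgroup of the ambient group. -/
def IsMinimalNormal {G : Type*} [Group G] (M : Subgroup G) : Prop :=
  M.Normal ∧ M ≠ ⊥ ∧ ∀ N : Subgroup G, N.Normal → N ≤ M → N = ⊥ ∨ N = M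

/-- `M` is a minimal normal subgroup of the subgroup `H`. -/
def IsMinimalNormalIn {G : Type*} [Group G] (M H : Subgroup G) : Prop :=
  NormalIn M H ∧ M ≠ ⊥ ∧ ∀ N : Subgroup G, NormalIn N H → N ≤ M → N = ⊥ ∨ N = M

/-! ### The graphs `Γ(r,s)` and their automorphisms -/

/-- In `Γ(r,s)`, the vertex `(i,j)` is joined to the four vertices `(i ± 1, j ± 1)`. -/
def gammaRel (r s : ℕ) (x y : ZMod r × ZMod s) : Prop :=
  (y.1 = x.1 + 1 ∨ y.1 = x.1 - 1) ∧ (y.2 = x.2 + 1 ∨ y.2 = x.2 - 1)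

/-- The graph `Γ(r,s)` on `ℤ_r × ℤ_s`. -/
def Gamma (r s : ℕ) : SimpleGraph (ZMod r × ZMod s) := SimpleGraph.fromRel (gammaRel r s)

/-- `μ : (i,j) ↦ (i+1, j)`. -/
def mu (r s : ℕ) : Equiv.Perm (ZMod r × ZMod s) :=
  (Equiv.addRight (1 : ZMod r)).prodCongr (Equiv.refl (ZMod s))

/-- `ν : (i,j) ↦ (i, j+1)`. -/
def nu (r s : ℕ) : Equiv.Perm (ZMod r × ZMod s) :=
  (Equiv.refl (ZMod r)).prodCongr (Equiv.addRight (1 : ZMod s))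

/-- `σ : (i,j) ↦ (-i, j)`. -/
def sigma (r s : ℕ) : Equiv.Perm (ZMod r × ZMod s) :=
  (Equiv.neg (ZMod r)).prodCongr (Equiv.refl (ZMod s))

/-- `τ : (i,j) ↦ (-i, -j)`. -/
def tau (r s : ℕ) : Equiv.Perm (ZMod r × ZMod s) :=
  (Equiv.neg (ZMod r)).prodCongr (Equiv.neg (ZMod s))

/-- `σν : (i,j) ↦ (-i, j+1)`. -/
def sigmaNu (r s : ℕ) : Equiv.Perm (ZMod r × ZMod s) :=
  (Equiv.neg (ZMod r)).prodCongr (Equiv.addRight (1 : ZMod s))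

/-- `μν : (i,j) ↦ (i+1, j+1)`. -/
def muNu (r s : ℕ) : Equiv.Perm (ZMod r × ZMod s) :=
  (Equiv.addRight (1 : ZMod r)).prodCongr (Equiv.addRight (1 : ZMod s))

/-- `σμν : (i,j) ↦ (-(i+1), j+1)`. -/
def sigmaMuNu (r s : ℕ) : Equiv.Perm (ZMod r × ZMod s) :=
  ((Equiv.addRight (1 : ZMod r)).trans (Equiv.neg (ZMod r))).prodCongr
    (Equiv.addRight (1 : ZMod s))

/-- `μ² : (i,j) ↦ (i+2, j)`. -/
def muSq (r s : ℕ) : Equiv.Perm (ZMod r × ZMod s) :=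
  (Equiv.addRight (2 : ZMod r)).prodCongr (Equiv.refl (ZMod s))

/-- `ν² : (i,j) ↦ (i, j+2)`. -/
def nuSq (r s : ℕ) : Equiv.Perm (ZMod r × ZMod s) :=
  (Equiv.refl (ZMod r)).prodCongr (Equiv.addRight (2 : ZMod s))

/-- `μ^k : (i,j) ↦ (i+k, j)`. -/
def muPow (r s k : ℕ) : Equiv.Perm (ZMod r × ZMod s) :=
  (Equiv.addRight ((k : ZMod r))).prodCongr (Equiv.refl (ZMod s))

/-- `μ^k ν² : (i,j) ↦ (i+k, j+2)`. -/
def muPowNuSq (r s k : ℕ) : Equiv.Perm (ZMod r × ZMod s) :=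
  (Equiv.addRight ((k : ZMod r))).prodCongr (Equiv.addRight (2 : ZMod s))

/-- `G(r,s) = ⟨μ, ν, σ⟩`. -/
def Ggroup (r s : ℕ) : Subgroup (Equiv.Perm (ZMod r × ZMod s)) :=
  Subgroup.closure {mu r s, nu r s, sigma r s}

/-- `H(r,s) = ⟨μ, σν, τ⟩`. -/
def Hgroup (r s : ℕ) : Subgroup (Equiv.Perm (ZMod r × ZMod s)) :=
  Subgroup.closure {mu r s, sigmaNu r s, tau r s}

/-! ### The graphs `Γ⁺(r,s)` (for `r`, `s` even) -/

/-- `X⁺`: the set of `(i,j)` with `i` and `j` of the same parity. -/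
def XPlus (r s : ℕ) : Set (ZMod r × ZMod s) := {x | x.1.val % 2 = x.2.val % 2}

/-- `Γ⁺(r,s)`, the subgraph of `Γ(r,s)` induced on `X⁺`. -/
def GammaPlus (r s : ℕ) : SimpleGraph (XPlus r s) :=
  SimpleGraph.induce (XPlus r s) (Gamma r s)

section parity

lemma val_add_one_mod_two (r : ℕ) (hr : 2 ∣ r) (hr0 : r ≠ 0) (i : ZMod r) :
    (i + 1).val % 2 = (i.val + 1) % 2 := by
  haveI : NeZero r := ⟨hr0⟩
  haveI : Fact (1 < r) := ⟨by have := Nat.le_of_dvd (Nat.pos_of_ne_zero hr0) hr; omega⟩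
  rw [ZMod.val_add, Nat.mod_mod_of_dvd _ hr, ZMod.val_one]

lemma val_add_two_mod_two (r : ℕ) (hr : 2 ∣ r) (hr0 : r ≠ 0) (i : ZMod r) :
    (i + 2).val % 2 = i.val % 2 := by
  have h1 := val_add_one_mod_two r hr hr0 i
  have h2 := val_add_one_mod_two r hr hr0 (i + 1)
  rw [show i + 1 + 1 = i + 2 by ring] at h2
  omega

lemma val_neg_mod_two (r : ℕ) (hr : 2 ∣ r) (hr0 : r ≠ 0) (i : ZMod r) :
    (-i).val % 2 = i.val % 2 := by
  haveI : NeZero r := ⟨hr0⟩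
  rcases eq_or_ne i 0 with h | h
  · simp [h]
  · have h1 : (-i).val = r - i.val := by rw [ZMod.neg_val]; simp [h]
    have h2 : i.val < r := ZMod.val_lt i
    have h3 : i.val ≠ 0 := fun hh => h ((ZMod.val_eq_zero i).mp hh)
    obtain ⟨t, rfl⟩ := hr
    rw [h1]
    omega

end parity

section plusPerms

variable (r s : ℕ)

/-- The restriction of `μ²` to `X⁺`. -/
def muSqP (hr : 2 ∣ r) (hr0 : r ≠ 0) : Equiv.Perm (XPlus r s) :=
  (muSq r s).subtypePerm (by
    intro x
    have h := val_add_two_mod_two r hr hr0 x.1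
    simp only [XPlus, Set.mem_setOf_eq, muSq, Equiv.prodCongr_apply, Prod.map,
      Equiv.coe_addRight, Equiv.refl_apply]
    omega)

/-- The restriction of `ν²` to `X⁺`. -/
def nuSqP (hs : 2 ∣ s) (hs0 : s ≠ 0) : Equiv.Perm (XPlus r s) :=
  (nuSq r s).subtypePerm (by
    intro x
    have h := val_add_two_mod_two s hs hs0 x.2
    simp only [XPlus, Set.mem_setOf_eq, nuSq, Equiv.prodCongr_apply, Prod.map,
      Equiv.coe_addRight, Equiv.refl_apply]
    omega)

/-- The restriction of `μν` to `X⁺`. -/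
def muNuP (hr : 2 ∣ r) (hr0 : r ≠ 0) (hs : 2 ∣ s) (hs0 : s ≠ 0) : Equiv.Perm (XPlus r s) :=
  (muNu r s).subtypePerm (by
    intro x
    have h1 := val_add_one_mod_two r hr hr0 x.1
    have h2 := val_add_one_mod_two s hs hs0 x.2
    simp only [XPlus, Set.mem_setOf_eq, muNu, Equiv.prodCongr_apply, Prod.map,
      Equiv.coe_addRight]
    omega)

/-- The restriction of `σ` to `X⁺`. -/
def sigmaP (hr : 2 ∣ r) (hr0 : r ≠ 0) : Equiv.Perm (XPlus r s) :=
  (sigma r s).subtypePerm (by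
    intro x
    have h := val_neg_mod_two r hr hr0 x.1
    simp only [XPlus, Set.mem_setOf_eq, sigma, Equiv.prodCongr_apply, Prod.map,
      Equiv.neg_apply, Equiv.refl_apply]
    omega)

/-- The restriction of `τ` to `X⁺`. -/
def tauP (hr : 2 ∣ r) (hr0 : r ≠ 0) (hs : 2 ∣ s) (hs0 : s ≠ 0) : Equiv.Perm (XPlus r s) :=
  (tau r s).subtypePerm (by
    intro x
    have h1 := val_neg_mod_two r hr hr0 x.1
    have h2 := val_neg_mod_two s hs hs0 x.2
    simp only [XPlus, Set.mem_setOf_eq, tau, Equiv.prodCongr_apply, Prod.map,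
      Equiv.neg_apply]
    omega)

/-- The restriction of `σμν` to `X⁺`. -/
def sigmaMuNuP (hr : 2 ∣ r) (hr0 : r ≠ 0) (hs : 2 ∣ s) (hs0 : s ≠ 0) :
    Equiv.Perm (XPlus r s) :=
  (sigmaMuNu r s).subtypePerm (by
    intro x
    have h1 := val_neg_mod_two r hr hr0 (x.1 + 1)
    have h2 := val_add_one_mod_two r hr hr0 x.1
    have h3 := val_add_one_mod_two s hs hs0 x.2
    simp only [XPlus, Set.mem_setOf_eq, sigmaMuNu, Equiv.prodCongr_apply, Prod.map,
      Equiv.trans_apply, Equiv.coe_addRight, Equiv.neg_apply]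
    omega)

/-- `G⁺(r,s) = ⟨μ², μν, σ⟩` acting on `X⁺`. -/
def GPlusGroup (hr : 2 ∣ r) (hr0 : r ≠ 0) (hs : 2 ∣ s) (hs0 : s ≠ 0) :
    Subgroup (Equiv.Perm (XPlus r s)) :=
  Subgroup.closure {muSqP r s hr hr0, muNuP r s hr hr0 hs hs0, sigmaP r s hr hr0}

/-- `H⁺(r,s) = ⟨μ², σμν, τ⟩` acting on `X⁺`. -/
def HPlusGroup (hr : 2 ∣ r) (hr0 : r ≠ 0) (hs : 2 ∣ s) (hs0 : s ≠ 0) :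
    Subgroup (Equiv.Perm (XPlus r s)) :=
  Subgroup.closure
    {muSqP r s hr hr0, sigmaMuNuP r s hr hr0 hs hs0, tauP r s hr hr0 hs hs0}

end plusPerms

/-! ### The standard double cover `Γ₂(r,s)` -/

/-- Adjacency of the double cover: `(i,j)_δ ~ (i ± 1, j ± 1)_{δ+1}`. -/
def gamma2Rel (r s : ℕ) (x y : (ZMod r × ZMod s) × ZMod 2) : Prop :=
  (y.1.1 = x.1.1 + 1 ∨ y.1.1 = x.1.1 - 1) ∧ (y.1.2 = x.1.2 + 1 ∨ y.1.2 = x.1.2 - 1) ∧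
    y.2 = x.2 + 1

/-- `Γ₂(r,s)`, the standard double cover of `Γ(r,s)`. -/
def Gamma2 (r s : ℕ) : SimpleGraph ((ZMod r × ZMod s) × ZMod 2) :=
  SimpleGraph.fromRel (gamma2Rel r s)

/-- `μ : (i,j)_δ ↦ (i+1, j)_δ` on the double cover. -/
def muD (r s : ℕ) : Equiv.Perm ((ZMod r × ZMod s) × ZMod 2) :=
  (mu r s).prodCongr (Equiv.refl (ZMod 2))

/-- `ν : (i,j)_δ ↦ (i, j+1)_δ` on the double cover. -/
def nuD (r s : ℕ) : Equiv.Perm ((ZMod r × ZMod s) × ZMod 2) :=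
  (nu r s).prodCongr (Equiv.refl (ZMod 2))

/-- `σ : (i,j)_δ ↦ (i, -j)_{δ+1}` on the double cover. -/
def sigmaD (r s : ℕ) : Equiv.Perm ((ZMod r × ZMod s) × ZMod 2) :=
  ((Equiv.refl (ZMod r)).prodCongr (Equiv.neg (ZMod s))).prodCongr
    (Equiv.addRight (1 : ZMod 2))

/-- `τ : (i,j)_δ ↦ (-i, -j)_δ` on the double cover. -/
def tauD (r s : ℕ) : Equiv.Perm ((ZMod r × ZMod s) × ZMod 2) :=
  (tau r s).prodCongr (Equiv.refl (ZMod 2))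

/-- `G₂(r,s) = ⟨μ, ν, σ, τ⟩` on the double cover. -/
def G2group (r s : ℕ) : Subgroup (Equiv.Perm ((ZMod r × ZMod s) × ZMod 2)) :=
  Subgroup.closure {muD r s, nuD r s, sigmaD r s, tauD r s}





/-- General affine-type permutation of `ZMod r × ZMod s`. -/
def aff (r s : ℕ) (e d : Bool) (a : ZMod r) (b : ZMod s) :
    Equiv.Perm (ZMod r × ZMod s) :=
  ((cond e (Equiv.neg (ZMod r)) (Equiv.refl _)).trans (Equiv.addRight a)).prodCongr
    ((cond d (Equiv.neg (ZMod s)) (Equiv.refl _)).trans (Equiv.addRight b))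

lemma aff_apply (r s : ℕ) (e d : Bool) (a : ZMod r) (b : ZMod s) (x : ZMod r × ZMod s) :
    aff r s e d a b x = ((cond e (-x.1) x.1) + a, (cond d (-x.2) x.2) + b) := by
  cases e <;> cases d <;> rfl

lemma aff_congr {r s : ℕ} {e d : Bool} {a a' : ZMod r} {b b' : ZMod s}
    (h1 : a = a') (h2 : b = b') : aff r s e d a b = aff r s e d a' b' := by
  rw [h1, h2]

lemma aff_mul (r s : ℕ) (e d e' d' : Bool) (a a' : ZMod r) (b b' : ZMod s) :
    aff r s e d a b * aff r s e' d' a' b' =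
      aff r s (xor e e') (xor d d') ((cond e (-a') a') + a) ((cond d (-b') b') + b) := by
  apply Equiv.ext; intro x
  cases e <;> cases d <;> cases e' <;> cases d' <;>
    simp [aff_apply, Equiv.Perm.mul_apply, Prod.ext_iff] <;> constructor <;> ring

lemma aff_one (r s : ℕ) : aff r s false false 0 0 = 1 := by
  apply Equiv.ext; intro x; simp [aff_apply]

lemma aff_inv (r s : ℕ) (e d : Bool) (a : ZMod r) (b : ZMod s) :
    (aff r s e d a b)⁻¹ = aff r s e d (cond e a (-a)) (cond d b (-b)) := by
  apply inv_eq_of_mul_eq_one_right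
  rw [aff_mul]
  cases e <;> cases d <;> simp [aff_one]


section main

variable (p : ℕ)

lemma mu_eq : mu p 4 = aff p 4 false false 1 0 := by
  apply Equiv.ext; intro x; simp [mu, aff_apply, Prod.map]

lemma sigmaNu_eq : sigmaNu p 4 = aff p 4 true false 0 1 := by
  apply Equiv.ext; intro x; simp [sigmaNu, aff_apply, Prod.map]

lemma tau_eq : tau p 4 = aff p 4 true true 0 0 := by
  apply Equiv.ext; intro x; simp [tau, aff_apply, Prod.map]

lemma nuSq_eq : nuSq p 4 = aff p 4 false false 0 2 := by
  apply Equiv.ext; intro x; simp [nuSq, aff_apply, Prod.map]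

/-- The subgroup of all affine-type permutations. -/
def affSubgroup : Subgroup (Equiv.Perm (ZMod p × ZMod 4)) where
  carrier := {g | ∃ e d a b, g = aff p 4 e d a b}
  one_mem' := ⟨false, false, 0, 0, (aff_one p 4).symm⟩
  mul_mem' := by
    rintro g g' ⟨e, d, a, b, rfl⟩ ⟨e', d', a', b', rfl⟩
    exact ⟨_, _, _, _, aff_mul p 4 e d e' d' a a' b b'⟩
  inv_mem' := by
    rintro g ⟨e, d, a, b, rfl⟩
    exact ⟨_, _, _, _, aff_inv p 4 e d a b⟩

lemma hgroup_le_aff : Hgroup p 4 ≤ affSubgroup p := by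
  rw [Hgroup, Subgroup.closure_le]
  rintro g (rfl | rfl | rfl)
  · exact ⟨_, _, _, _, mu_eq p⟩
  · exact ⟨_, _, _, _, sigmaNu_eq p⟩
  · exact ⟨_, _, _, _, tau_eq p⟩

lemma mu_mem_H : mu p 4 ∈ Hgroup p 4 :=
  Subgroup.subset_closure (by simp)

lemma sigmaNu_mem_H : sigmaNu p 4 ∈ Hgroup p 4 :=
  Subgroup.subset_closure (by simp)

lemma nuSq_mem_H : nuSq p 4 ∈ Hgroup p 4 := by
  have : nuSq p 4 = sigmaNu p 4 * sigmaNu p 4 := by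
    apply Equiv.ext; intro x
    simp [nuSq, sigmaNu, Equiv.Perm.mul_apply, Prod.map, Prod.ext_iff]
    ring
  rw [this]
  exact mul_mem (sigmaNu_mem_H p) (sigmaNu_mem_H p)

lemma aff_pow (a : ZMod p) (b : ZMod 4) (n : ℕ) :
    (aff p 4 false false a b) ^ n = aff p 4 false false (n • a) (n • b) := by
  induction n with
  | zero => simp [aff_one]
  | succ n ih =>
    rw [pow_succ, ih, aff_mul]
    exact aff_congr (by (try simp only [Bool.cond_false, Bool.cond_true, Bool.not_false, Bool.not_true, Bool.xor_self, Bool.xor_false, Bool.false_xor, Bool.xor_true, Bool.true_xor]); rw [succ_nsmul]; ring) (by (try simp only [Bool.cond_false, Bool.cond_true, Bool.not_false, Bool.not_true, Bool.xor_self, Bool.xor_false, Bool.false_xor, Bool.xor_true, Bool.true_xor]); rw [succ_nsmul]; ring)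

/-- Translations in the first coordinate. -/
def muSubgroup : Subgroup (Equiv.Perm (ZMod p × ZMod 4)) where
  carrier := {g | ∃ a, g = aff p 4 false false a 0}
  one_mem' := ⟨0, (aff_one p 4).symm⟩
  mul_mem' := by
    rintro g g' ⟨a, rfl⟩ ⟨a', rfl⟩
    exact ⟨a' + a, by rw [aff_mul]; exact aff_congr rfl (by (try simp only [Bool.cond_false, Bool.cond_true, Bool.not_false, Bool.not_true, Bool.xor_self, Bool.xor_false, Bool.false_xor, Bool.xor_true, Bool.true_xor]); ring)⟩
  inv_mem' := by
    rintro g ⟨a, rfl⟩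
    exact ⟨-a, aff_inv p 4 false false a 0⟩

variable [Fact p.Prime]

lemma mu_pow_nat (n : ℕ) : (mu p 4) ^ n = aff p 4 false false (n : ZMod p) 0 := by
  rw [mu_eq, aff_pow]
  exact aff_congr (by simp [nsmul_eq_mul]) (by simp)

lemma closure_mu_eq : Subgroup.closure {mu p 4} = muSubgroup p := by
  apply le_antisymm
  · rw [Subgroup.closure_le]
    rintro g rfl
    exact ⟨1, mu_eq p⟩
  · rintro g ⟨a, rfl⟩
    have : (aff p 4 false false a 0) = (mu p 4) ^ a.val := by
      rw [mu_pow_nat, ZMod.natCast_val, ZMod.cast_id]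
    rw [this]
    exact Subgroup.pow_mem _ (Subgroup.subset_closure (Set.mem_singleton _)) _

lemma mu_le_of_mem {N : Subgroup (Equiv.Perm (ZMod p × ZMod 4))} {c : ZMod p}
    (hc : c ≠ 0) (h : aff p 4 false false c 0 ∈ N) :
    Subgroup.closure {mu p 4} ≤ N := by
  rw [Subgroup.closure_le, Set.singleton_subset_iff]
  have : mu p 4 = (aff p 4 false false c 0) ^ (c⁻¹).val := by
    rw [aff_pow, mu_eq]
    refine (aff_congr ?_ (by simp)).symm
    rw [nsmul_eq_mul, ZMod.natCast_val, ZMod.cast_id, inv_mul_cancel₀ hc]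
  rw [this]
  exact pow_mem h _

lemma nuSq_sq : nuSq p 4 * nuSq p 4 = 1 := by
  rw [nuSq_eq, aff_mul]
  have : ((2 : ZMod 4) + 2) = 0 := by decide
  simp only [Bool.xor_false, cond_false]
  rw [show ((0 : ZMod p) + 0 : ZMod p) = 0 by ring, this, aff_one]

/-- The two-element subgroup `{1, ν²}`. -/
def nuSqSubgroup : Subgroup (Equiv.Perm (ZMod p × ZMod 4)) where
  carrier := {g | g = 1 ∨ g = nuSq p 4}
  one_mem' := Or.inl rfl
  mul_mem' := by
    rintro g g' (rfl | rfl) (rfl | rfl)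
    · exact Or.inl (one_mul 1)
    · exact Or.inr (one_mul _)
    · exact Or.inr (mul_one _)
    · exact Or.inl (nuSq_sq p)
  inv_mem' := by
    rintro g (rfl | rfl)
    · exact Or.inl inv_one
    · exact Or.inr (inv_eq_of_mul_eq_one_right (nuSq_sq p))

lemma closure_nuSq_eq : Subgroup.closure {nuSq p 4} = nuSqSubgroup p := by
  apply le_antisymm
  · rw [Subgroup.closure_le]
    rintro g rfl
    exact Or.inr rfl
  · rintro g (rfl | rfl)
    · exact one_mem _
    · exact Subgroup.subset_closure rfl

end main

section main2

variable {p : ℕ}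

lemma two_nz (hp : p.Prime) (hpo : Odd p) : (2 : ZMod p) ≠ 0 := by
  intro h
  have h2 : ((2 : ℕ) : ZMod p) = 0 := by exact_mod_cast h
  have := (ZMod.natCast_eq_zero_iff 2 p).mp h2
  rcases (Nat.prime_two.eq_one_or_self_of_dvd p this) with h' | h'
  · exact hp.one_lt.ne' h'
  · rw [h'] at hpo; exact (Nat.not_odd_iff_even.mpr even_two) hpo

lemma four_nz (hp : p.Prime) (hpo : Odd p) : (4 : ZMod p) ≠ 0 := by
  haveI : Fact p.Prime := ⟨hp⟩
  have : (4 : ZMod p) = 2 * 2 := by norm_num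
  rw [this]
  exact mul_ne_zero (two_nz hp hpo) (two_nz hp hpo)

lemma normalIn_mu (hp : p.Prime) : NormalIn (Subgroup.closure {mu p 4}) (Hgroup p 4) := by
  constructor
  · rw [Subgroup.closure_le, Set.singleton_subset_iff]
    exact mu_mem_H p
  · intro h hh n hn
    haveI : Fact p.Prime := ⟨hp⟩
    obtain ⟨e, d, a2, b2, rfl⟩ := hgroup_le_aff p hh
    rw [closure_mu_eq] at hn ⊢
    obtain ⟨c, rfl⟩ := hn
    refine ⟨cond e (-c) c, ?_⟩
    rw [aff_inv, aff_mul, aff_mul]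
    cases e <;> cases d <;>
      exact aff_congr (by (try simp only [Bool.cond_false, Bool.cond_true, Bool.not_false, Bool.not_true, Bool.xor_self, Bool.xor_false, Bool.false_xor, Bool.xor_true, Bool.true_xor]); ring)
        (by (try simp only [Bool.cond_false, Bool.cond_true, Bool.not_false, Bool.not_true, Bool.xor_self, Bool.xor_false, Bool.false_xor, Bool.xor_true, Bool.true_xor]); ring)

lemma normalIn_nuSq (hp : p.Prime) : NormalIn (Subgroup.closure {nuSq p 4}) (Hgroup p 4) := by
  constructor
  · rw [Subgroup.closure_le, Set.singleton_subset_iff]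
    exact nuSq_mem_H p
  · intro h hh n hn
    haveI : Fact p.Prime := ⟨hp⟩
    obtain ⟨e, d, a2, b2, rfl⟩ := hgroup_le_aff p hh
    rw [closure_nuSq_eq] at hn ⊢
    rcases hn with rfl | rfl
    · exact Or.inl (by group)
    · refine Or.inr ?_
      rw [nuSq_eq, aff_inv, aff_mul, aff_mul]
      cases e <;> cases d <;>
        exact aff_congr
          (by (try simp only [Bool.cond_false, Bool.cond_true, Bool.not_false, Bool.not_true, Bool.xor_self, Bool.xor_false, Bool.false_xor, Bool.xor_true, Bool.true_xor]); ring)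
          (by (try simp only [Bool.cond_false, Bool.cond_true, Bool.not_false, Bool.not_true, Bool.xor_self, Bool.xor_false, Bool.false_xor, Bool.xor_true, Bool.true_xor]); ring_nf; try decide)

lemma closure_mu_ne_bot (hp : p.Prime) : Subgroup.closure {mu p 4} ≠ ⊥ := by
  intro hbot
  have hm : mu p 4 ∈ Subgroup.closure {mu p 4} :=
    Subgroup.subset_closure (Set.mem_singleton _)
  rw [hbot, Subgroup.mem_bot] at hm
  haveI : Fact p.Prime := ⟨hp⟩
  have h1 : ((0 : ZMod p) + 1, (0 : ZMod 4)) = ((0 : ZMod p), (0 : ZMod 4)) :=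
    congrFun (congrArg (fun g : Equiv.Perm (ZMod p × ZMod 4) => (g ·)) hm)
      ((0 : ZMod p), (0 : ZMod 4))
  have h2 : (0 : ZMod p) + 1 = 0 := congrArg Prod.fst h1
  rw [zero_add] at h2
  exact one_ne_zero h2

lemma closure_nuSq_ne_bot (hp : p.Prime) : Subgroup.closure {nuSq p 4} ≠ ⊥ := by
  intro hbot
  have hm : nuSq p 4 ∈ Subgroup.closure {nuSq p 4} :=
    Subgroup.subset_closure (Set.mem_singleton _)
  rw [hbot, Subgroup.mem_bot] at hm
  have h1 : ((0 : ZMod p), (0 : ZMod 4) + 2) = ((0 : ZMod p), (0 : ZMod 4)) :=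
    congrFun (congrArg (fun g : Equiv.Perm (ZMod p × ZMod 4) => (g ·)) hm)
      ((0 : ZMod p), (0 : ZMod 4))
  have h2 : (0 : ZMod 4) + 2 = 0 := congrArg Prod.snd h1
  rw [zero_add] at h2
  exact absurd h2 (by decide)

end main2

end OG4

namespace OG4

/-- the minimal normal subgroups of `H(p,4)` are exactly `⟨μ⟩` and `⟨ν²⟩`. -/
theorem stmt14 (p : ℕ) (hp : p.Prime) (hpo : Odd p)
    (M : Subgroup (Equiv.Perm (ZMod p × ZMod 4))) :
    IsMinimalNormalIn M (Hgroup p 4) ↔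
      (M = Subgroup.closure {mu p 4} ∨ M = Subgroup.closure {nuSq p 4}) := by
  haveI : Fact p.Prime := ⟨hp⟩
  constructor
  · rintro ⟨⟨hMH, hconj⟩, hMne, hmin⟩
    obtain ⟨⟨m, hmM⟩, hm1'⟩ := Subgroup.ne_bot_iff_exists_ne_one.mp hMne
    have hm1 : m ≠ 1 := fun h => hm1' (Subtype.ext h)
    obtain ⟨e, d, a, b, rfl⟩ := hgroup_le_aff p (hMH hmM)
    cases e with
    | true =>
      have key : mu p 4 * aff p 4 true d a b * (mu p 4)⁻¹ * (aff p 4 true d a b)⁻¹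
          = aff p 4 false false 2 0 := by
        rw [mu_eq, aff_inv, aff_inv, aff_mul, aff_mul, aff_mul]
        cases d <;>
          exact aff_congr (by (try simp only [Bool.cond_false, Bool.cond_true, Bool.not_false, Bool.not_true, Bool.xor_self, Bool.xor_false, Bool.false_xor, Bool.xor_true, Bool.true_xor]); ring)
            (by (try simp only [Bool.cond_false, Bool.cond_true, Bool.not_false, Bool.not_true, Bool.xor_self, Bool.xor_false, Bool.false_xor, Bool.xor_true, Bool.true_xor]); ring)
      have h2 : aff p 4 false false 2 0 ∈ M := by
        rw [← key]; exact mul_mem (hconj _ (mu_mem_H p) _ hmM) (inv_mem hmM)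
      have hle := mu_le_of_mem p (two_nz hp hpo) h2
      rcases hmin _ (normalIn_mu hp) hle with hbot | heq
      · exact absurd hbot (closure_mu_ne_bot hp)
      · exact Or.inl heq.symm
    | false =>
      cases d with
      | true =>
        have key : (sigmaNu p 4 * aff p 4 false true a b * (sigmaNu p 4)⁻¹ *
            (aff p 4 false true a b)⁻¹) * (aff p 4 false true a b * aff p 4 false true a b)
            = nuSq p 4 := by
          rw [sigmaNu_eq, nuSq_eq, aff_inv, aff_inv, aff_mul, aff_mul, aff_mul, aff_mul,
            aff_mul]
          exact aff_congr (by (try simp only [Bool.cond_false, Bool.cond_true, Bool.not_false, Bool.not_true, Bool.xor_self, Bool.xor_false, Bool.false_xor, Bool.xor_true, Bool.true_xor]); ring)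
            (by (try simp only [Bool.cond_false, Bool.cond_true, Bool.not_false, Bool.not_true, Bool.xor_self, Bool.xor_false, Bool.false_xor, Bool.xor_true, Bool.true_xor]); ring)
        have h2 : nuSq p 4 ∈ M := by
          rw [← key]
          exact mul_mem (mul_mem (hconj _ (sigmaNu_mem_H p) _ hmM) (inv_mem hmM))
            (mul_mem hmM hmM)
        have hle : Subgroup.closure {nuSq p 4} ≤ M := by
          rw [Subgroup.closure_le, Set.singleton_subset_iff]; exact h2
        rcases hmin _ (normalIn_nuSq hp) hle with hbot | heq
        · exact absurd hbot (closure_nuSq_ne_bot hp)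
        · exact Or.inr heq.symm
      | false =>
        by_cases ha : a = 0
        · subst ha
          rcases (by decide : ∀ b : ZMod 4, b = 0 ∨ b = 2 ∨ b + b = 2) b with rfl | rfl | hbb
          · exact absurd (aff_one p 4) hm1
          · have h2 : nuSq p 4 ∈ M := by rw [nuSq_eq]; exact hmM
            have hle : Subgroup.closure {nuSq p 4} ≤ M := by
              rw [Subgroup.closure_le, Set.singleton_subset_iff]; exact h2
            rcases hmin _ (normalIn_nuSq hp) hle with hbot | heq
            · exact absurd hbot (closure_nuSq_ne_bot hp)
            · exact Or.inr heq.symm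
          · have key : aff p 4 false false 0 b * aff p 4 false false 0 b = nuSq p 4 := by
              rw [nuSq_eq, aff_mul]
              exact aff_congr (by (try simp only [Bool.cond_false, Bool.cond_true, Bool.not_false, Bool.not_true, Bool.xor_self, Bool.xor_false, Bool.false_xor, Bool.xor_true, Bool.true_xor]); ring)
                (by (try simp only [Bool.cond_false, Bool.cond_true, Bool.not_false, Bool.not_true, Bool.xor_self, Bool.xor_false, Bool.false_xor, Bool.xor_true, Bool.true_xor]); linear_combination hbb)
            have h2 : nuSq p 4 ∈ M := by rw [← key]; exact mul_mem hmM hmM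
            have hle : Subgroup.closure {nuSq p 4} ≤ M := by
              rw [Subgroup.closure_le, Set.singleton_subset_iff]; exact h2
            rcases hmin _ (normalIn_nuSq hp) hle with hbot | heq
            · exact absurd hbot (closure_nuSq_ne_bot hp)
            · exact Or.inr heq.symm
        · have hbb : b + (b + (b + b)) = 0 :=
            (by decide : ∀ b : ZMod 4, b + (b + (b + b)) = 0) b
          have key : aff p 4 false false a b * (aff p 4 false false a b *
              (aff p 4 false false a b * aff p 4 false false a b))
              = aff p 4 false false (a + (a + (a + a))) 0 := by
            rw [aff_mul, aff_mul, aff_mul]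
            exact aff_congr (by (try simp only [Bool.cond_false, Bool.cond_true, Bool.not_false, Bool.not_true, Bool.xor_self, Bool.xor_false, Bool.false_xor, Bool.xor_true, Bool.true_xor]); ring)
              (by (try simp only [Bool.cond_false, Bool.cond_true, Bool.not_false, Bool.not_true, Bool.xor_self, Bool.xor_false, Bool.false_xor, Bool.xor_true, Bool.true_xor]); linear_combination hbb)
          have ha4 : a + (a + (a + a)) ≠ 0 := by
            have h4 : a + (a + (a + a)) = 4 * a := by ring
            rw [h4]
            exact mul_ne_zero (four_nz hp hpo) ha
          have h2 : aff p 4 false false (a + (a + (a + a))) 0 ∈ M := by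
            rw [← key]; exact mul_mem hmM (mul_mem hmM (mul_mem hmM hmM))
          have hle := mu_le_of_mem p ha4 h2
          rcases hmin _ (normalIn_mu hp) hle with hbot | heq
          · exact absurd hbot (closure_mu_ne_bot hp)
          · exact Or.inl heq.symm
  · rintro (rfl | rfl)
    · refine ⟨normalIn_mu hp, closure_mu_ne_bot hp, fun N hN hle => ?_⟩
      by_cases hbot : N = ⊥
      · exact Or.inl hbot
      · refine Or.inr (le_antisymm hle ?_)
        obtain ⟨⟨n, hnN⟩, hn1'⟩ := Subgroup.ne_bot_iff_exists_ne_one.mp hbot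
        have hn1 : n ≠ 1 := fun h => hn1' (Subtype.ext h)
        have hn' := hle hnN
        rw [closure_mu_eq] at hn'
        obtain ⟨c, rfl⟩ := hn'
        have hc : c ≠ 0 := by rintro rfl; exact hn1 (aff_one p 4)
        exact mu_le_of_mem p hc hnN
    · refine ⟨normalIn_nuSq hp, closure_nuSq_ne_bot hp, fun N hN hle => ?_⟩
      by_cases hbot : N = ⊥
      · exact Or.inl hbot
      · refine Or.inr (le_antisymm hle ?_)
        obtain ⟨⟨n, hnN⟩, hn1'⟩ := Subgroup.ne_bot_iff_exists_ne_one.mp hbot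
        have hn1 : n ≠ 1 := fun h => hn1' (Subtype.ext h)
        have hn' := hle hnN
        rw [closure_nuSq_eq] at hn'
        rcases hn' with rfl | rfl
        · exact absurd rfl hn1
        · rw [Subgroup.closure_le, Set.singleton_subset_iff]
          exact hnN


end OG4
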